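/- arXiv:1511.05337 — 3 statements merged into one kernel-verified Lean document; each statement's English description precedes it below -/
import Mathlib

section
/- Let S^B be a Bernoulli sample with inclusion probability f = n/N from {1,...,N} (0 < n < N), and couple it with a simple random sample S of fixed size n as follows: if |S^B| = n set S = S^B; if |S^B| < n augment S^B with a simple random sample of size n − |S^B| from the complement; if |S^B| > n remove a simple random sample of size |S^B| − n from S^B. Then S is a simple random sample without replacement of size n from {1,...,N}. -/
open Finset

lemma card_supersets {α : Type*} [Fintype α] [DecidableEq α] (s : Finset α) (k : ℕ)
    (h : s.card ≤ k) :
    ((powersetCard k (univ : Finset α)).filter (fun b => s ⊆ b)).card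
      = (Fintype.card α - s.card).choose (k - s.card) := by
  rw [← Finset.card_compl s, ← Finset.card_powersetCard (k - s.card) sᶜ]
  apply Finset.card_bij' (fun b _ => b \ s) (fun c _ => c ∪ s)
  · intro b hb
    simp only [mem_filter, Finset.mem_powersetCard_univ] at hb
    rw [Finset.mem_powersetCard]
    constructor
    · intro x hx
      simp only [Finset.mem_sdiff] at hx
      simp [hx.2]
    · rw [Finset.card_sdiff_of_subset hb.2, hb.1]
  · intro c hc
    rw [Finset.mem_powersetCard] at hc
    have hd : Disjoint c s := by
      refine Finset.disjoint_left.mpr fun x hx hxs => ?_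
      have := hc.1 hx
      simp at this
      exact this hxs
    simp only [mem_filter, Finset.mem_powersetCard_univ]
    refine ⟨?_, Finset.subset_union_right⟩
    rw [Finset.card_union_of_disjoint hd, hc.2, Nat.sub_add_cancel h]
  · intro b hb
    simp only [mem_filter, Finset.mem_powersetCard_univ] at hb
    exact Finset.sdiff_union_of_subset hb.2
  · intro c hc
    rw [Finset.mem_powersetCard] at hc
    have hd : Disjoint c s := by
      refine Finset.disjoint_left.mpr fun x hx hxs => ?_
      have := hc.1 hx
      simp at this
      exact this hxs
    rw [Finset.union_sdiff_distrib, Finset.sdiff_self, Finset.union_empty,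
      Finset.sdiff_eq_self_of_disjoint hd]

/-- Hájek's coupling of Bernoulli sampling and simple random sampling: starting
from a Bernoulli sample `b` with inclusion probability `f = n/N`, keep it if
`|b| = n`, augment it by a simple random sample of the complement if `|b| < n`,
and remove a simple random sample of `b` if `|b| > n`.  The resulting sample `s`
is a simple random sample of size `n`: for every `s` with `|s| = n`, the total
probability of producing `s` equals `1 / C(N,n)`. -/
theorem hajek_coupling_srs (N n : ℕ) (hn : 0 < n) (hnN : n < N)
    (s : Finset (Fin N)) (hs : s.card = n) :
    ∑ b : Finset (Fin N),
      (((n : ℝ) / N) ^ b.card * (1 - (n : ℝ) / N) ^ (N - b.card)) *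
        (if b.card = n then (if s = b then (1 : ℝ) else 0)
         else if b.card < n then
           (if b ⊆ s then (((N - b.card).choose (n - b.card) : ℝ))⁻¹ else 0)
         else
           (if s ⊆ b then ((b.card.choose (b.card - n) : ℝ))⁻¹ else 0))
      = ((N.choose n : ℝ))⁻¹ := by
  classical
  set f : ℝ := (n : ℝ) / N with hf
  have hNn : (N.choose n : ℝ) ≠ 0 := by
    exact_mod_cast (Nat.choose_pos hnN.le).ne'
  have huniv : (univ : Finset (Finset (Fin N)))
      = (range (N+1)).biUnion (fun k => powersetCard k univ) := by
    rw [← powerset_univ, Finset.powerset_card_biUnion, card_univ, Fintype.card_fin]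
  rw [huniv, Finset.sum_biUnion ((Finset.univ.pairwise_disjoint_powersetCard).set_pairwise _)]
  have hterm : ∀ k ∈ range (N+1),
      (∑ b ∈ powersetCard k (univ : Finset (Fin N)),
        ((f) ^ b.card * (1 - f) ^ (N - b.card)) *
          (if b.card = n then (if s = b then (1 : ℝ) else 0)
           else if b.card < n then
             (if b ⊆ s then (((N - b.card).choose (n - b.card) : ℝ))⁻¹ else 0)
           else
             (if s ⊆ b then ((b.card.choose (b.card - n) : ℝ))⁻¹ else 0)))
      = ((N.choose n : ℝ))⁻¹ * ((N.choose k : ℝ) * (f ^ k * (1 - f) ^ (N - k))) := by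
    intro k hk
    have hkN : k ≤ N := Nat.lt_succ_iff.mp (mem_range.mp hk)
    have hcard : ∀ b ∈ powersetCard k (univ : Finset (Fin N)), b.card = k :=
      fun b hb => (Finset.mem_powersetCard.mp hb).2
    rw [Finset.sum_congr rfl (fun b hb => by rw [hcard b hb]), ← Finset.mul_sum]
    rcases lt_trichotomy k n with hlt | heq | hgt
    · simp only [hlt.ne, if_false, if_pos hlt]
      have hfil : (powersetCard k (univ : Finset (Fin N))).filter (fun x => x ⊆ s)
          = powersetCard k s := by
        ext b
        simp [Finset.mem_powersetCard, Finset.mem_powersetCard_univ, and_comm]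
      rw [Finset.sum_ite, Finset.sum_const_zero, add_zero, Finset.sum_const, hfil,
        Finset.card_powersetCard, hs, nsmul_eq_mul]
      have key : ((N.choose n : ℝ)) * (n.choose k) = (N.choose k) * ((N - k).choose (n - k)) := by
        exact_mod_cast (Nat.choose_mul (n := N) hlt.le)
      have hnk : ((N - k).choose (n - k) : ℝ) ≠ 0 := by
        exact_mod_cast (Nat.choose_pos (Nat.sub_le_sub_right hnN.le k)).ne'
      field_simp
      linear_combination (f ^ k * (1 - f) ^ (N - k)) * key
    · simp only [if_pos heq]
      have hmem : s ∈ powersetCard k (univ : Finset (Fin N)) :=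
        Finset.mem_powersetCard_univ.mpr (hs.trans heq.symm)
      rw [Finset.sum_ite_eq _ s (fun _ => (1:ℝ)), if_pos hmem, heq]
      field_simp
    · simp only [hgt.ne', if_false, if_neg (not_lt.mpr hgt.le)]
      rw [Finset.sum_ite, Finset.sum_const_zero, add_zero, Finset.sum_const,
        card_supersets s k (by rw [hs]; exact hgt.le), Fintype.card_fin, hs, nsmul_eq_mul]
      have key : ((N.choose k : ℝ)) * (k.choose n) = (N.choose n) * ((N - n).choose (k - n)) := by
        exact_mod_cast (Nat.choose_mul (n := N) hgt.le)
      have hsym : k.choose (k - n) = k.choose n := Nat.choose_symm hgt.le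
      have hkn : (k.choose n : ℝ) ≠ 0 := by
        exact_mod_cast (Nat.choose_pos hgt.le).ne'
      rw [hsym]
      field_simp
      linear_combination (-(f ^ k * (1 - f) ^ (N - k))) * key
  rw [Finset.sum_congr rfl hterm, ← Finset.mul_sum]
  have hbin : ∑ k ∈ range (N+1), (N.choose k : ℝ) * (f ^ k * (1 - f) ^ (N - k)) = 1 := by
    have h1 : ∑ k ∈ range (N+1), (N.choose k : ℝ) * (f ^ k * (1 - f) ^ (N - k))
        = ∑ k ∈ range (N+1), f ^ k * (1 - f) ^ (N - k) * (N.choose k : ℝ) := by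
      apply Finset.sum_congr rfl; intros; ring
    rw [h1, ← add_pow f (1 - f) N]
    norm_num
  rw [hbin, mul_one]
end

section
/- Let S^WR be a with-replacement simple random sample of n draws from {1,...,N}, let S^d be its set of distinct units of size n^d, and let S = S^d ∪ S^c where S^c is a simple random sample without replacement of size n − n^d from {1,...,N} \ S^d. Then S is a simple random sample without replacement of size n from {1,...,N}. -/
open Finset

/-- The number of `n`-subsets of `Fin N` containing a fixed set `t` with `|t| ≤ n` is
`C(N - |t|, n - |t|)`. -/
lemma aux_card_supersets {N : ℕ} (n : ℕ) (t : Finset (Fin N)) (htn : t.card ≤ n) :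
    ((Finset.powersetCard n (univ : Finset (Fin N))).filter (fun s => t ⊆ s)).card
      = (N - t.card).choose (n - t.card) := by
  classical
  have h1 : ((Finset.powersetCard n (univ : Finset (Fin N))).filter (fun s => t ⊆ s)).card
      = (Finset.powersetCard (n - t.card) tᶜ).card := by
    apply Finset.card_bij' (fun T _ => T \ t) (fun u _ => t ∪ u)
    · intro T hT
      simp only [Finset.mem_filter, Finset.mem_powersetCard] at hT
      obtain ⟨⟨_, hcard⟩, hts⟩ := hT
      rw [Finset.mem_powersetCard]
      constructor
      · intro x hx
        simp only [Finset.mem_sdiff] at hx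
        simp [hx.2]
      · rw [Finset.card_sdiff_of_subset hts, hcard]
    · intro u hu
      rw [Finset.mem_powersetCard] at hu
      obtain ⟨hsub, hcard⟩ := hu
      have hdisj : Disjoint t u := by
        rw [Finset.disjoint_left]
        intro x hxt hxu
        have := hsub hxu
        simp at this
        exact this hxt
      simp only [Finset.mem_filter, Finset.mem_powersetCard]
      refine ⟨⟨Finset.subset_univ _, ?_⟩, Finset.subset_union_left⟩
      rw [Finset.card_union_of_disjoint hdisj, hcard]
      omega
    · intro T hT
      simp only [Finset.mem_filter, Finset.mem_powersetCard] at hT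
      exact Finset.union_sdiff_of_subset hT.2
    · intro u hu
      rw [Finset.mem_powersetCard] at hu
      have hdisj : Disjoint t u := by
        rw [Finset.disjoint_left]
        intro x hxt hxu
        have := hu.1 hxu
        simp at this
        exact this hxt
      exact Finset.union_sdiff_cancel_left hdisj
  rw [h1, Finset.card_powersetCard, Finset.card_compl, Fintype.card_fin]

/-- Coupling of with-replacement and without-replacement simple random sampling
(Algorithm 2): draw `n` times with replacement (uniform draws
`ω : Fin n → Fin N`), keep the set of distinct units `S^d = image ω`, and
complete it by a simple random sample of size `n − |S^d|` from the complement.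
The resulting sample is a simple random sample without replacement of size `n`:
for every `s` with `|s| = n`, the total probability of producing `s` is
`1 / C(N,n)`. -/
theorem sir_si_coupling_srs (N n : ℕ) (hn : 0 < n) (hnN : n ≤ N)
    (s : Finset (Fin N)) (hs : s.card = n) :
    ∑ ω : Fin n → Fin N, ((N : ℝ) ^ n)⁻¹ *
      (if Finset.image ω Finset.univ ⊆ s then
        (((N - (Finset.image ω Finset.univ).card).choose
            (n - (Finset.image ω Finset.univ).card) : ℝ))⁻¹
       else 0)
      = ((N.choose n : ℝ))⁻¹ := by
  classical
  have hN : 0 < N := lt_of_lt_of_le hn hnN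
  set F : Finset (Fin N) → ℝ := fun u => ∑ ω : Fin n → Fin N, ((N : ℝ) ^ n)⁻¹ *
      (if Finset.image ω Finset.univ ⊆ u then
        (((N - (Finset.image ω Finset.univ).card).choose
            (n - (Finset.image ω Finset.univ).card) : ℝ))⁻¹
       else 0) with hF
  have himcard : ∀ ω : Fin n → Fin N, (Finset.image ω Finset.univ).card ≤ n := by
    intro ω
    calc (Finset.image ω Finset.univ).card ≤ (Finset.univ : Finset (Fin n)).card :=
          Finset.card_image_le
      _ = n := by simp
  -- Step 1: total probability is 1
  have htotal : ∑ u ∈ Finset.powersetCard n (univ : Finset (Fin N)), F u = 1 := by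
    rw [hF]
    rw [Finset.sum_comm]
    have key : ∀ ω : Fin n → Fin N,
        (∑ u ∈ Finset.powersetCard n (univ : Finset (Fin N)), ((N : ℝ) ^ n)⁻¹ *
          (if Finset.image ω Finset.univ ⊆ u then
            (((N - (Finset.image ω Finset.univ).card).choose
                (n - (Finset.image ω Finset.univ).card) : ℝ))⁻¹ else 0))
          = ((N : ℝ) ^ n)⁻¹ := by
      intro ω
      rw [← Finset.mul_sum]
      set t := Finset.image ω Finset.univ with ht
      set c : ℝ := (((N - t.card).choose (n - t.card) : ℝ))⁻¹ with hc
      have hsum : (∑ u ∈ Finset.powersetCard n (univ : Finset (Fin N)),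
          if t ⊆ u then c else 0) = ((N - t.card).choose (n - t.card) : ℝ) * c := by
        rw [← Finset.sum_filter, Finset.sum_const, aux_card_supersets n t (himcard ω),
          nsmul_eq_mul]
      rw [hsum, hc]
      have hpos : 0 < (N - t.card).choose (n - t.card) :=
        Nat.choose_pos (by have := himcard ω; omega)
      rw [mul_inv_cancel₀ (by exact_mod_cast hpos.ne'), mul_one]
    rw [Finset.sum_congr rfl (fun ω _ => key ω), Finset.sum_const]
    simp only [Finset.card_univ, Fintype.card_fun, Fintype.card_fin, nsmul_eq_mul]
    rw [Nat.cast_pow, mul_inv_cancel₀]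
    positivity
  -- Step 2: symmetry, F is constant on n-subsets
  have hsymm : ∀ u ∈ Finset.powersetCard n (univ : Finset (Fin N)), F u = F s := by
    intro u hu
    rw [Finset.mem_powersetCard] at hu
    obtain ⟨-, hucard⟩ := hu
    have e1 : {x : Fin N // x ∈ s} ≃ {x : Fin N // x ∈ u} := by
      apply Fintype.equivOfCardEq
      simp [Fintype.card_subtype, hs, hucard]
    have e2 : {x : Fin N // ¬ x ∈ s} ≃ {x : Fin N // ¬ x ∈ u} := by
      apply Fintype.equivOfCardEq
      rw [Fintype.card_subtype_compl, Fintype.card_subtype_compl]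
      simp [Fintype.card_subtype, hs, hucard]
    set σ : Equiv.Perm (Fin N) := Equiv.subtypeCongr e1 e2 with hσ
    have hmem : ∀ x : Fin N, σ x ∈ u ↔ x ∈ s := by
      intro x
      by_cases h : x ∈ s
      · have hx : σ x = (e1 ⟨x, h⟩ : Fin N) := by
          simp [hσ, Equiv.subtypeCongr, h]
        rw [hx]
        simp [h, (e1 ⟨x, h⟩).2]
      · have hx : σ x = (e2 ⟨x, h⟩ : Fin N) := by
          simp [hσ, Equiv.subtypeCongr, h]
        rw [hx]
        simp [h, (e2 ⟨x, h⟩).2]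
    have key : F s = F u := by
      rw [hF]
      apply Fintype.sum_bijective (fun ω : Fin n → Fin N => σ ∘ ω)
        ((Equiv.arrowCongr (Equiv.refl (Fin n)) σ).bijective)
      intro ω
      have himg : Finset.image (σ ∘ ω) Finset.univ
          = (Finset.image ω Finset.univ).image σ := by
        rw [Finset.image_image]
      have hcardeq : ((Finset.image ω Finset.univ).image σ).card
          = (Finset.image ω Finset.univ).card :=
        Finset.card_image_of_injective _ σ.injective
      have hsub : (Finset.image ω Finset.univ).image σ ⊆ u
          ↔ Finset.image ω Finset.univ ⊆ s := by
        rw [Finset.image_subset_iff]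
        constructor
        · intro h x hx
          exact (hmem x).mp (h x hx)
        · intro h x hx
          exact (hmem x).mpr (h hx)
      rw [himg, hcardeq]
      simp only [hsub]
    exact key.symm
  -- Conclude
  have hcardP : (Finset.powersetCard n (univ : Finset (Fin N))).card = N.choose n := by
    rw [Finset.card_powersetCard, Finset.card_univ, Fintype.card_fin]
  rw [Finset.sum_congr rfl hsymm, Finset.sum_const, hcardP, nsmul_eq_mul] at htotal
  have hchoose : (0 : ℝ) < (N.choose n : ℝ) := by
    exact_mod_cast Nat.choose_pos hnN
  show F s = ((N.choose n : ℝ))⁻¹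
  field_simp at htotal ⊢
  linarith [htotal]
end

section
/- Let (Z_1,...,Z_n) and (X_1,...,X_n) be random vectors on a common probability space and let D = (D_1,...,D_n) be multinomial(m; 1/n,...,1/n) independent of (Z,X). Define Z̄* = m^{-1} Σ_j D_j Z_j and X̄* = m^{-1} Σ_j D_j X_j, Z̄ = n^{-1} Σ_j Z_j, X̄ = n^{-1} Σ_j X_j. Then E(Z̄* − X̄*)² ≤ E(Z̄ − X̄)² + m^{-1} E[ n^{-1} Σ_j ((Z_j − X_j) − (Z̄ − X̄))² ]. -/
open MeasureTheory Finset

lemma sum_fun_succ {n m : ℕ} (f : (Fin (m+1) → Fin n) → ℝ) :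
    ∑ d : Fin (m+1) → Fin n, f d
      = ∑ j : Fin n, ∑ d : Fin m → Fin n, f (Fin.cons j d) := by
  calc ∑ d : Fin (m+1) → Fin n, f d
      = ∑ p : Fin n × (Fin m → Fin n), f (Fin.cons p.1 p.2) :=
        (Fintype.sum_equiv (Fin.consEquiv fun _ => Fin n) _ f fun p => rfl).symm
    _ = ∑ j : Fin n, ∑ d : Fin m → Fin n, f (Fin.cons j d) := Fintype.sum_prod_type ..

lemma cons_sum {n m : ℕ} (y : Fin n → ℝ) (j : Fin n) (d : Fin m → Fin n) :
    ∑ k : Fin (m+1), y (Fin.cons (α := fun _ => Fin n) j d k) = y j + ∑ k, y (d k) := by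
  simp [Fin.sum_univ_succ]

lemma card_sum_const {n m : ℕ} (c : ℝ) :
    ∑ _d : Fin m → Fin n, c = (n:ℝ)^m * c := by
  simp [Finset.sum_const, Fintype.card_fun, mul_comm]

lemma lin_id (n : ℕ) (y : Fin n → ℝ) :
    ∀ m : ℕ, (n:ℝ) * ∑ d : Fin m → Fin n, (∑ k, y (d k))
      = (m:ℝ) * (n:ℝ)^m * (∑ j, y j) := by
  intro m
  induction m with
  | zero => simp
  | succ m ih =>
      rw [sum_fun_succ (fun d => ∑ k, y (d k))]
      simp only [cons_sum, Finset.sum_add_distrib, card_sum_const,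
        Finset.sum_const, Finset.card_univ, Fintype.card_fin, Fintype.card_fun, Nat.cast_pow, nsmul_eq_mul,
        smul_eq_mul, ← Finset.mul_sum]
      push_cast
      linear_combination (n:ℝ) * ih

lemma sq_id (n : ℕ) (y : Fin n → ℝ) :
    ∀ m : ℕ, (n:ℝ)^2 * ∑ d : Fin m → Fin n, (∑ k, y (d k))^2
      = (m:ℝ) * (n:ℝ)^(m+1) * (∑ j, y j ^ 2)
        + (m:ℝ) * ((m:ℝ)-1) * (n:ℝ)^m * (∑ j, y j)^2 := by
  intro m
  induction m with
  | zero => simp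
  | succ m ih =>
      have expand : ∀ (j : Fin n) (d : Fin m → Fin n),
          (y j + ∑ k, y (d k))^2
            = y j^2 + (2*y j)*(∑ k, y (d k)) + (∑ k, y (d k))^2 := fun j d => by ring
      rw [sum_fun_succ (fun d => (∑ k, y (d k))^2)]
      simp only [cons_sum, expand, Finset.sum_add_distrib, card_sum_const,
        ← Finset.mul_sum, ← Finset.sum_mul, Finset.sum_const, Finset.card_univ,
        Fintype.card_fin, Fintype.card_fun, Nat.cast_pow, nsmul_eq_mul, smul_eq_mul]
      push_cast
      linear_combination (n:ℝ) * ih + 2 * (∑ j, y j) * (n:ℝ) * lin_id n y m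

lemma var_expand (n : ℕ) (y : Fin n → ℝ) (c : ℝ) :
    ∑ j, (y j - c)^2 = (∑ j, y j^2) - 2*c*(∑ j, y j) + (n:ℝ) * c^2 := by
  have h : ∀ j : Fin n, (y j - c)^2 = y j^2 - (2*c)*y j + c^2 := fun j => by ring
  simp only [h, Finset.sum_add_distrib, Finset.sum_sub_distrib, ← Finset.mul_sum,
    Finset.sum_const, Finset.card_univ, Fintype.card_fin, nsmul_eq_mul]

lemma pointwise_id (n m : ℕ) (hn : 0 < n) (hm : 0 < m) (y : Fin n → ℝ) :
    ∑ d : Fin m → Fin n, ((n:ℝ)^m)⁻¹ * ((m:ℝ)⁻¹ * ∑ k, y (d k))^2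
      = ((n:ℝ)⁻¹ * ∑ j, y j)^2
        + (m:ℝ)⁻¹ * ((n:ℝ)⁻¹ * ∑ j, (y j - (n:ℝ)⁻¹ * ∑ i, y i)^2) := by
  have hn' : (n:ℝ) ≠ 0 := Nat.cast_ne_zero.2 hn.ne'
  have hm' : (m:ℝ) ≠ 0 := Nat.cast_ne_zero.2 hm.ne'
  have hnm : ((n:ℝ)^m) ≠ 0 := pow_ne_zero _ hn'
  set K : ℝ := (n:ℝ)^m * (m:ℝ)^2 * (n:ℝ)^2 with hK
  have hKne : K ≠ 0 := by positivity
  apply mul_left_cancel₀ hKne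
  have hsummand : ∀ d : Fin m → Fin n,
      K * (((n:ℝ)^m)⁻¹ * ((m:ℝ)⁻¹ * ∑ k, y (d k))^2)
        = (n:ℝ)^2 * (∑ k, y (d k))^2 := fun d => by
    field_simp [hK]
    ring
  rw [Finset.mul_sum]
  simp only [hsummand, ← Finset.mul_sum]
  rw [sq_id n y m, var_expand n y ((n:ℝ)⁻¹ * ∑ i, y i)]
  field_simp
  rw [hK]
  ring

/-- Bootstrap coupling bound: with the same multinomial resampling weights
(modeled by uniform draws `d : Fin m → Fin n`, independent of `(Z,X)` by
product-space construction) applied to both sequences,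
`E(Z̄* − X̄*)² ≤ E(Z̄ − X̄)² + m⁻¹ E[ n⁻¹ Σ_j ((Z_j − X_j) − (Z̄ − X̄))² ]`. -/
theorem bootstrap_coupling_bound
    (Ω : Type) [MeasurableSpace Ω] (μ : Measure Ω) [IsProbabilityMeasure μ]
    (n m : ℕ) (hn : 0 < n) (hm : 0 < m)
    (Z X : Fin n → Ω → ℝ)
    (hZmeas : ∀ j, Measurable (Z j)) (hXmeas : ∀ j, Measurable (X j))
    (hZ2 : ∀ j, MemLp (Z j) 2 μ) (hX2 : ∀ j, MemLp (X j) 2 μ) :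
    ∑ d : Fin m → Fin n, ((n : ℝ) ^ m)⁻¹ *
        ∫ ω, ((m : ℝ)⁻¹ * ∑ k, Z (d k) ω - (m : ℝ)⁻¹ * ∑ k, X (d k) ω) ^ 2 ∂μ
      ≤ (∫ ω, ((n : ℝ)⁻¹ * ∑ j, Z j ω - (n : ℝ)⁻¹ * ∑ j, X j ω) ^ 2 ∂μ)
        + (m : ℝ)⁻¹ *
          ∫ ω, (n : ℝ)⁻¹ * ∑ j, ((Z j ω - X j ω)
            - ((n : ℝ)⁻¹ * ∑ i, Z i ω - (n : ℝ)⁻¹ * ∑ i, X i ω)) ^ 2 ∂μ := by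
  have hY2 : ∀ j, MemLp (fun ω => Z j ω - X j ω) 2 μ := fun j => (hZ2 j).sub (hX2 j)
  have hW2 : MemLp (fun ω => (n:ℝ)⁻¹ * ∑ j, (Z j ω - X j ω)) 2 μ :=
    (memLp_finset_sum univ fun j _ => hY2 j).const_mul _
  have hsub : ∀ ω, (n:ℝ)⁻¹ * ∑ j, Z j ω - (n:ℝ)⁻¹ * ∑ j, X j ω
      = (n:ℝ)⁻¹ * ∑ j, (Z j ω - X j ω) := by
    intro ω; rw [← mul_sub, ← Finset.sum_sub_distrib]
  have hsubd : ∀ (d : Fin m → Fin n) ω,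
      (m:ℝ)⁻¹ * ∑ k, Z (d k) ω - (m:ℝ)⁻¹ * ∑ k, X (d k) ω
        = (m:ℝ)⁻¹ * ∑ k, (Z (d k) ω - X (d k) ω) := by
    intro d ω; rw [← mul_sub, ← Finset.sum_sub_distrib]
  simp only [hsub, hsubd]
  have hint_d : ∀ d : Fin m → Fin n,
      Integrable (fun ω => ((m:ℝ)⁻¹ * ∑ k, (Z (d k) ω - X (d k) ω))^2) μ :=
    fun d => ((memLp_finset_sum univ fun k _ => hY2 (d k)).const_mul _).integrable_sq
  have hintA : Integrable (fun ω => ((n:ℝ)⁻¹ * ∑ j, (Z j ω - X j ω))^2) μ :=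
    hW2.integrable_sq
  have hintB : Integrable (fun ω => (n:ℝ)⁻¹ *
      ∑ j, ((Z j ω - X j ω) - (n:ℝ)⁻¹ * ∑ i, (Z i ω - X i ω))^2) μ :=
    (integrable_finset_sum univ fun j _ => ((hY2 j).sub hW2).integrable_sq).const_mul _
  have lhs_eq : ∑ d : Fin m → Fin n, ((n:ℝ)^m)⁻¹ *
        ∫ ω, ((m:ℝ)⁻¹ * ∑ k, (Z (d k) ω - X (d k) ω))^2 ∂μ
      = ∫ ω, ∑ d : Fin m → Fin n,
          ((n:ℝ)^m)⁻¹ * ((m:ℝ)⁻¹ * ∑ k, (Z (d k) ω - X (d k) ω))^2 ∂μ := by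
    calc ∑ d : Fin m → Fin n, ((n:ℝ)^m)⁻¹ *
          ∫ ω, ((m:ℝ)⁻¹ * ∑ k, (Z (d k) ω - X (d k) ω))^2 ∂μ
        = ∑ d : Fin m → Fin n,
            ∫ ω, ((n:ℝ)^m)⁻¹ * ((m:ℝ)⁻¹ * ∑ k, (Z (d k) ω - X (d k) ω))^2 ∂μ := by
          simp only [integral_const_mul]
      _ = _ := (integral_finset_sum _ fun d _ => (hint_d d).const_mul _).symm
  rw [lhs_eq]
  have hpt : ∀ ω, ∑ d : Fin m → Fin n,
        ((n:ℝ)^m)⁻¹ * ((m:ℝ)⁻¹ * ∑ k, (Z (d k) ω - X (d k) ω))^2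
      = ((n:ℝ)⁻¹ * ∑ j, (Z j ω - X j ω))^2
        + (m:ℝ)⁻¹ * ((n:ℝ)⁻¹ *
            ∑ j, ((Z j ω - X j ω) - (n:ℝ)⁻¹ * ∑ i, (Z i ω - X i ω))^2) :=
    fun ω => pointwise_id n m hn hm (fun j => Z j ω - X j ω)
  simp_rw [hpt]
  rw [integral_add hintA (hintB.const_mul _), integral_const_mul]
end
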